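/- For all x,y in the open unit disk 𝔹² = {z ∈ ℂ : |z| < 1}, the point z = (y(1−|x|²) + x(1−|y|²))/(1 − |x|²|y|² + |1 − x·conj(y)|·√((1−|x|²)(1−|y|²))) lies in 𝔹² and satisfies ρ(x,z) = ρ(y,z) = ρ(x,y)/2; that is, z is the hyperbolic midpoint of x and y. -/

import Mathlib

open ComplexConjugate

/-- The hyperbolic metric of the unit disk. -/
noncomputable def rho (x y : ℂ) : ℝ :=
  2 * Real.arsinh (‖x - y‖ /
    Real.sqrt ((1 - ‖x‖ ^ 2) * (1 - ‖y‖ ^ 2)))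

private lemma rho_comm (x y : ℂ) : rho x y = rho y x := by
  unfold rho
  rw [norm_sub_rev, mul_comm (1 - ‖x‖ ^ 2) (1 - ‖y‖ ^ 2)]

private lemma normSq_num (x y : ℂ) :
    Complex.normSq (y * (1 - (Complex.normSq x : ℂ)) + x * (1 - (Complex.normSq y : ℂ))) =
      (1 - Complex.normSq x)^2 * Complex.normSq y + (1 - Complex.normSq y)^2 * Complex.normSq x
        + 2*(1 - Complex.normSq x)*(1 - Complex.normSq y)*(x * conj y).re := by
  simp [Complex.normSq_apply, Complex.mul_re, Complex.mul_im, Complex.add_re, Complex.add_im,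
    Complex.sub_re, Complex.sub_im]
  ring

private lemma normSq_num2 (x y : ℂ) (u : ℝ) :
    Complex.normSq ((1 - (Complex.normSq x : ℂ)) * ((Complex.normSq y : ℂ) * x - y) + (u:ℂ) * x) =
      (1 - Complex.normSq x)^2 * Complex.normSq y *
        (Complex.normSq y * Complex.normSq x + 1 - 2*(x * conj y).re)
      + u^2 * Complex.normSq x
      + 2*(1 - Complex.normSq x)*u*(Complex.normSq y * Complex.normSq x - (x * conj y).re) := by
  simp [Complex.normSq_apply, Complex.mul_re, Complex.mul_im, Complex.add_re, Complex.add_im,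
    Complex.sub_re, Complex.sub_im]
  ring

private lemma abs_sub_sq' (x y : ℂ) :
    ‖x - y‖ ^ 2 = Complex.normSq x + Complex.normSq y - 2*(x * conj y).re := by
  rw [Complex.sq_norm]
  simp [Complex.normSq_apply, Complex.mul_re, Complex.mul_im, Complex.sub_re, Complex.sub_im]
  ring

private lemma abs_one_sub_sq (x y : ℂ) :
    ‖1 - x * conj y‖ ^ 2
      = 1 - 2*(x * conj y).re + Complex.normSq x * Complex.normSq y := by
  rw [Complex.sq_norm]
  simp [Complex.normSq_apply, Complex.mul_re, Complex.mul_im, Complex.sub_re, Complex.sub_im]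
  ring

set_option maxHeartbeats 1000000 in
private lemma aux (x y : ℂ) (hx : ‖x‖ < 1) (hy : ‖y‖ < 1)
    (z : ℂ)
    (hz : z = (y * (1 - (‖x‖ : ℂ) ^ 2) + x * (1 - (‖y‖ : ℂ) ^ 2)) /
      ((1 - ‖x‖ ^ 2 * ‖y‖ ^ 2 +
        ‖1 - x * conj y‖ *
          Real.sqrt ((1 - ‖x‖ ^ 2) * (1 - ‖y‖ ^ 2)) : ℝ) : ℂ)) :
    ‖z‖ < 1 ∧ rho x z = rho x y / 2 := by
  have hp1 : Complex.normSq x < 1 := by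
    rw [← Complex.sq_norm]; nlinarith [norm_nonneg x]
  have hq1 : Complex.normSq y < 1 := by
    rw [← Complex.sq_norm]; nlinarith [norm_nonneg y]
  have hp0 : 0 ≤ Complex.normSq x := Complex.normSq_nonneg x
  have hq0 : 0 ≤ Complex.normSq y := Complex.normSq_nonneg y
  have e1 : ((‖x‖ : ℂ))^2 = ((Complex.normSq x : ℝ) : ℂ) := by
    rw [← Complex.ofReal_pow, Complex.sq_norm]
  have e2 : ((‖y‖ : ℂ))^2 = ((Complex.normSq y : ℝ) : ℂ) := by
    rw [← Complex.ofReal_pow, Complex.sq_norm]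
  rw [e1, e2, Complex.sq_norm x, Complex.sq_norm y] at hz
  set p := Complex.normSq x with hp_def
  set q := Complex.normSq y with hq_def
  set r := (x * conj y).re with hr_def
  set c := ‖1 - x * conj y‖ with hc_def
  set d := ‖x - y‖ with hd_def
  set s := Real.sqrt ((1 - p) * (1 - q)) with hs_def
  set D := (1 - p * q + c * s : ℝ) with hD_def
  have hs2 : s^2 = (1-p)*(1-q) := Real.sq_sqrt (by nlinarith)
  have hs0 : 0 < s := Real.sqrt_pos.mpr (by nlinarith)
  have hc2 : c^2 = 1 - 2*r + p*q := abs_one_sub_sq x y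
  have hd2 : d^2 = p + q - 2*r := abs_sub_sq' x y
  have hc0 : 0 ≤ c := norm_nonneg _
  have hd0 : 0 ≤ d := norm_nonneg _
  have hsc : s ≤ c := by nlinarith [sq_nonneg d]
  have hc0' : 0 < c := lt_of_lt_of_le hs0 hsc
  have hD0 : 0 < D := by rw [hD_def]; nlinarith [mul_nonneg hc0 hs0.le]
  have hDne : (D:ℂ) ≠ 0 := by
    simpa using Complex.ofReal_ne_zero.mpr (ne_of_gt hD0)
  have hNz : Complex.normSq z = ((1-p)^2*q + (1-q)^2*p + 2*(1-p)*(1-q)*r) / D^2 := by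
    rw [hz, map_div₀, normSq_num, Complex.normSq_ofReal]
    ring
  have key1 : D^2 - ((1-p)^2*q + (1-q)^2*p + 2*(1-p)*(1-q)*r) = 2*c*s*D := by
    rw [hD_def]
    linear_combination (-(s^2)) * hc2 - (1-2*r+p*q) * hs2
  have h1z : 1 - Complex.normSq z = 2*c*s/D := by
    rw [hNz]
    field_simp
    linear_combination key1
  have habsz : ‖z‖ < 1 := by
    have hpos : 0 < 2*c*s/D := by positivity
    have h2 : ‖z‖ ^ 2 < 1 := by
      rw [Complex.sq_norm]; linarith
    nlinarith [norm_nonneg z]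
  refine ⟨habsz, ?_⟩
  -- x - z
  have hxzeq : x - z = ((1 - (p:ℂ)) * ((q:ℂ)*x - y) + ((c*s : ℝ):ℂ)*x) / (D:ℂ) := by
    rw [hz, eq_div_iff hDne, sub_mul, div_mul_cancel₀ _ hDne, hD_def]
    push_cast
    ring
  have hxz2 : ‖x - z‖^2
      = (1-p)*c*((c-s)*(p+q-2*p*q) + s*d^2) / D^2 := by
    rw [Complex.sq_norm, hxzeq, map_div₀, normSq_num2, Complex.normSq_ofReal]
    rw [div_eq_div_iff (by positivity) (by positivity)]
    linear_combination D^2 * ((p*c^2) * hs2 - ((1-p)*c*s) * hd2 - ((1-p)^2*q) * hc2)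
  have key2 : (c-s)*(p+q-2*p*q) + s*d^2 = (c-s)*D := by
    rw [hD_def]
    linear_combination s*hd2 - s*hc2 + c*hs2
  clear_value p q r c d s D
  -- the square of the arsinh argument
  have hzsq : (1 - ‖z‖ ^ 2) = 2*c*s/D := by
    rw [Complex.sq_norm]; exact h1z
  have hu2 : (‖x - z‖ / Real.sqrt ((1-p) * (1 - ‖z‖ ^ 2)))^2
      = (c-s)/(2*s) := by
    have hpos1 : 0 ≤ (1-p) * (1 - ‖z‖ ^ 2) :=
      mul_nonneg (by linarith) (by rw [hzsq]; positivity)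
    rw [div_pow, Real.sq_sqrt hpos1]
    rw [hzsq, hxz2, key2]
    have h1p0 : (0:ℝ) < 1 - p := by linarith
    field_simp
  have hu : ‖x - z‖ / Real.sqrt ((1-p) * (1 - ‖z‖ ^ 2))
      = Real.sqrt ((c-s)/(2*s)) := by
    rw [← Real.sqrt_sq (by positivity : 0 ≤ ‖x - z‖ / Real.sqrt ((1-p) * (1 - ‖z‖ ^ 2))), hu2]
  have hT0 : 0 ≤ (c-s)/(2*s) := div_nonneg (by linarith) (by linarith)
  have harsinh : 2 * Real.arsinh (Real.sqrt ((c-s)/(2*s))) = Real.arsinh (d/s) := by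
    apply Real.sinh_injective
    rw [Real.sinh_two_mul, Real.sinh_arsinh, Real.cosh_arsinh, Real.sinh_arsinh,
      Real.sq_sqrt hT0, mul_assoc, ← Real.sqrt_mul hT0]
    have hd2' : d^2 = c^2 - s^2 := by linear_combination hd2 - hc2 + hs2
    have hTT : (c-s)/(2*s) * (1 + (c-s)/(2*s)) = (d/(2*s))^2 := by
      rw [div_pow, hd2']
      field_simp
      ring
    rw [hTT, Real.sqrt_sq (div_nonneg hd0 (by linarith))]
    field_simp
  -- conclude
  unfold rho
  rw [Complex.sq_norm x, Complex.sq_norm y, ← hp_def, ← hq_def, ← hs_def, ← hd_def, hu, harsinh]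
  ring

theorem stmt3 (x y : ℂ) (hx : ‖x‖ < 1) (hy : ‖y‖ < 1)
    (z : ℂ)
    (hz : z = (y * (1 - (‖x‖ : ℂ) ^ 2) + x * (1 - (‖y‖ : ℂ) ^ 2)) /
      ((1 - ‖x‖ ^ 2 * ‖y‖ ^ 2 +
        ‖1 - x * conj y‖ *
          Real.sqrt ((1 - ‖x‖ ^ 2) * (1 - ‖y‖ ^ 2)) : ℝ) : ℂ)) :
    ‖z‖ < 1 ∧ rho x z = rho x y / 2 ∧ rho y z = rho x y / 2 := by
  have habsconj : ‖1 - y * conj x‖ = ‖1 - x * conj y‖ := by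
    rw [show (1 - y * conj x : ℂ) = conj (1 - x * conj y) by
      simp [map_sub, map_mul, Complex.conj_conj]; ring]
    exact Complex.norm_conj _
  have hz' : z = (x * (1 - (‖y‖ : ℂ) ^ 2) + y * (1 - (‖x‖ : ℂ) ^ 2)) /
      ((1 - ‖y‖ ^ 2 * ‖x‖ ^ 2 +
        ‖1 - y * conj x‖ *
          Real.sqrt ((1 - ‖y‖ ^ 2) * (1 - ‖x‖ ^ 2)) : ℝ) : ℂ) := by
    rw [hz, habsconj, mul_comm (1 - ‖y‖ ^ 2) (1 - ‖x‖ ^ 2),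
      mul_comm (‖y‖ ^ 2) (‖x‖ ^ 2), add_comm (x * _) (y * _)]
  obtain ⟨h1, h2⟩ := aux x y hx hy z hz
  obtain ⟨-, h3⟩ := aux y x hy hx z hz'
  exact ⟨h1, h2, by rw [h3, rho_comm y x]⟩
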